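/- Let n ≥ 1 and q ≤ n. Any subset of the grid H_n = {0,…,n−1} × {0,…,n−1} that is a union of q queue-paths has at most Σ_{i=0}^{q−1}(2n − 1 − 2i) = 2nq − q² points, and this bound is attained: there exist q pairwise disjoint queue-paths in H_n whose union has exactly 2nq − q² points. -/

import Mathlib

namespace MixedPaper

/-- A queue-path: any two of its points are comparable in the componentwise order. -/
def IsQueuePath (P : Set (ℤ × ℤ)) : Prop :=
  ∀ p ∈ P, ∀ p' ∈ P, (p.1 ≤ p'.1 ∧ p.2 ≤ p'.2) ∨ (p'.1 ≤ p.1 ∧ p'.2 ≤ p.2)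

/-- A stack-path: any two of its points are comparable in the order that is
increasing in the first and decreasing in the second coordinate. -/
def IsStackPath (P : Set (ℤ × ℤ)) : Prop :=
  ∀ p ∈ P, ∀ p' ∈ P, (p.1 ≤ p'.1 ∧ p'.2 ≤ p.2) ∨ (p'.1 ≤ p.1 ∧ p.2 ≤ p'.2)

/-- The grid `H_n = {0,…,n-1} × {0,…,n-1} ⊆ ℤ²`. -/
def gridH (n : ℕ) : Set (ℤ × ℤ) :=
  {p | 0 ≤ p.1 ∧ p.1 < n ∧ 0 ≤ p.2 ∧ p.2 < n}

/-- For `n ≥ 1` and `q ≤ n`, any subset of the grid `H_n` that is a union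
of `q` queue-paths has at most `Σ_{i=0}^{q-1} (2n − 1 − 2i) = 2nq − q²` points, and the
bound is attained by `q` pairwise disjoint queue-paths in `H_n`. -/


-- construction finset
noncomputable def hookF (n : ℕ) (i : ℕ) : Finset (ℤ × ℤ) :=
  ({(i : ℤ)} ×ˢ Finset.Icc 0 ((n:ℤ) - 1 - i)) ∪
    (Finset.Icc (i:ℤ) ((n:ℤ) - 1) ×ˢ {((n:ℤ) - 1 - i)})

lemma mem_hookF (n i : ℕ) (p : ℤ × ℤ) :
    p ∈ hookF n i ↔ (p.1 = i ∧ 0 ≤ p.2 ∧ p.2 ≤ (n:ℤ) - 1 - i) ∨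
      ((i:ℤ) ≤ p.1 ∧ p.1 ≤ (n:ℤ) - 1 ∧ p.2 = (n:ℤ) - 1 - i) := by
  obtain ⟨x, y⟩ := p
  simp [hookF, Finset.mem_union, Finset.mem_product, Finset.mem_Icc, Prod.ext_iff, and_assoc]
  omega

lemma hookF_card (n i : ℕ) (hi : i < n) : ((hookF n i).card : ℤ) = 2 * n - 1 - 2 * i := by
  have h1 : (({(i : ℤ)} ×ˢ Finset.Icc 0 ((n:ℤ) - 1 - i)) ∩
      (Finset.Icc (i:ℤ) ((n:ℤ) - 1) ×ˢ {((n:ℤ) - 1 - i)})) = {((i:ℤ), (n:ℤ) - 1 - i)} := by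
    ext ⟨x, y⟩
    simp only [Finset.mem_inter, Finset.mem_product, Finset.mem_singleton, Finset.mem_Icc,
      Prod.ext_iff]
    omega
  have := Finset.card_union_add_card_inter ({(i : ℤ)} ×ˢ Finset.Icc 0 ((n:ℤ) - 1 - i))
      (Finset.Icc (i:ℤ) ((n:ℤ) - 1) ×ˢ {((n:ℤ) - 1 - i)})
  rw [h1] at this
  have hA : ({(i : ℤ)} ×ˢ Finset.Icc 0 ((n:ℤ) - 1 - i)).card = n - i := by
    rw [Finset.card_product, Finset.card_singleton, Int.card_Icc]
    omega
  have hB : (Finset.Icc (i:ℤ) ((n:ℤ) - 1) ×ˢ {((n:ℤ) - 1 - i)}).card = n - i := by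
    rw [Finset.card_product, Finset.card_singleton, Int.card_Icc]
    omega
  rw [hA, hB, Finset.card_singleton] at this
  unfold hookF
  omega


lemma hookF_queue (n i : ℕ) : IsQueuePath (↑(hookF n i) : Set (ℤ × ℤ)) := by
  intro p hp p' hp'
  rw [Finset.mem_coe, mem_hookF] at hp hp'
  omega

lemma hookF_subset (n i : ℕ) (hi : i < n) : (↑(hookF n i) : Set (ℤ × ℤ)) ⊆ gridH n := by
  intro p hp
  rw [Finset.mem_coe, mem_hookF] at hp
  simp only [gridH, Set.mem_setOf_eq]
  omega

lemma hookF_disj (n : ℕ) (i j : ℕ) (hij : i ≠ j) :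
    Disjoint (↑(hookF n i) : Set (ℤ × ℤ)) ↑(hookF n j) := by
  rw [Set.disjoint_left]
  intro p hp hp'
  rw [Finset.mem_coe, mem_hookF] at hp hp'
  omega

lemma sum_formula (n q : ℕ) : ∑ i ∈ Finset.range q, ((2:ℤ) * n - 1 - 2 * i) =
    2 * n * q - q ^ 2 := by
  induction q with
  | zero => simp
  | succ k ih => rw [Finset.sum_range_succ, ih]; push_cast; ring

lemma construction (n q : ℕ) (hq : q ≤ n) :
    ∃ Q : Fin q → Set (ℤ × ℤ), (∀ i, IsQueuePath (Q i)) ∧ (∀ i, Q i ⊆ gridH n) ∧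
      (∀ i i' : Fin q, i ≠ i' → Disjoint (Q i) (Q i')) ∧
      ((⋃ i, Q i).ncard : ℤ) = 2 * n * q - q ^ 2 := by
  refine ⟨fun i => ↑(hookF n i), fun i => hookF_queue n i,
    fun i => hookF_subset n i (lt_of_lt_of_le i.2 hq), fun i i' h => hookF_disj n i i'
      (fun hc => h (Fin.ext hc)), ?_⟩
  have hU : (⋃ i : Fin q, (↑(hookF n i) : Set (ℤ × ℤ))) =
      ↑(Finset.univ.biUnion fun i : Fin q => hookF n i) := by
    ext p; simp
  rw [hU, Set.ncard_coe_finset]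
  rw [Finset.card_biUnion]
  · rw [← Finset.sum_range fun i => (hookF n i).card]
    push_cast
    rw [← sum_formula n q]
    apply Finset.sum_congr rfl
    intro i hi
    have : i < n := lt_of_lt_of_le (Finset.mem_range.mp hi) hq
    exact_mod_cast hookF_card n i this
  · intro i _ j _ hij
    have := hookF_disj n i j fun hc => hij (Fin.ext hc)
    rwa [Finset.disjoint_coe] at this


lemma target_card (n q : ℕ) (hq : q ≤ n) :
    ((((Finset.Ico (0:ℤ) n ×ˢ Finset.Ico (0:ℤ) n).filter
      (fun p => p.1 < (q:ℤ) ∨ (n:ℤ) - q ≤ p.2)).card : ℤ)) = 2 * n * q - q ^ 2 := by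
  set G := Finset.Ico (0:ℤ) n ×ˢ Finset.Ico (0:ℤ) n with hG
  have key := Finset.card_filter_add_card_filter_not
    (s := G) (p := fun p : ℤ × ℤ => p.1 < (q:ℤ) ∨ (n:ℤ) - q ≤ p.2)
  have hneg : G.filter (fun p => ¬(p.1 < (q:ℤ) ∨ (n:ℤ) - q ≤ p.2)) =
      Finset.Ico (q:ℤ) n ×ˢ Finset.Ico (0:ℤ) ((n:ℤ) - q) := by
    ext ⟨x, y⟩
    simp only [Finset.mem_filter, Finset.mem_product, Finset.mem_Ico, hG]
    omega
  have hGcard : G.card = n * n := by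
    rw [hG, Finset.card_product, Int.card_Ico]
    simp
  have hnegcard : (G.filter (fun p => ¬(p.1 < (q:ℤ) ∨ (n:ℤ) - q ≤ p.2))).card
      = (n-q) * (n-q) := by
    rw [hneg, Finset.card_product, Int.card_Ico, Int.card_Ico]
    have h1 : ((n:ℤ) - q).toNat = n - q := by omega
    have h2 : ((n:ℤ) - q - 0).toNat = n - q := by omega
    simp [h1, h2]
  rw [hnegcard, hGcard] at key
  have h2 : ((G.filter (fun p => p.1 < (q:ℤ) ∨ (n:ℤ) - q ≤ p.2)).card : ℤ)
      = (n:ℤ) * n - ((n:ℤ) - q) * ((n:ℤ) - q) := by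
    have h3 : (n - q) * (n - q) ≤ n * n := Nat.mul_le_mul (by omega) (by omega)
    have h4 : (G.filter (fun p => p.1 < (q:ℤ) ∨ (n:ℤ) - q ≤ p.2)).card
        = n * n - (n - q) * (n - q) := by omega
    rw [h4]
    push_cast [Nat.cast_sub h3, Nat.cast_sub hq]
    ring
  rw [h2]; ring

lemma bound (n q : ℕ) (hq : q ≤ n)
    (Q : Fin q → Set (ℤ × ℤ)) (hQ : ∀ i, IsQueuePath (Q i)) (hsub : (⋃ i, Q i) ⊆ gridH n) :
    ((⋃ i, Q i).ncard : ℤ) ≤ 2 * n * q - q ^ 2 := by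
  classical
  set U := ⋃ i, Q i with hU
  have hUfin : U.Finite := by
    apply Set.Finite.subset ((Finset.Ico (0:ℤ) n ×ˢ Finset.Ico (0:ℤ) n).finite_toSet)
    intro p hp
    have h := hsub hp
    simp only [gridH, Set.mem_setOf_eq] at h
    simp only [Finset.coe_product, Set.mem_prod, Finset.mem_coe, Finset.mem_Ico]
    omega
  have hgridmem : ∀ p ∈ U, 0 ≤ p.1 ∧ p.1 < n ∧ 0 ≤ p.2 ∧ p.2 < n := fun p hp => hsub hp
  have hidx : ∀ p ∈ U, ∃ i, p ∈ Q i := fun p hp => Set.mem_iUnion.mp hp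
  -- the set of points of U strictly before p on the same antidiagonal
  set R : ℤ × ℤ → Set (ℤ × ℤ) :=
    fun p => U ∩ {p' | p'.1 + p'.2 = p.1 + p.2 ∧ p'.1 < p.1} with hR
  have hRfin : ∀ p, (R p).Finite := fun p => hUfin.subset (Set.inter_subset_left)
  set r : ℤ × ℤ → ℕ := fun p => (R p).ncard with hr
  set m : ℤ × ℤ → ℤ := fun p => max 0 (p.1 + p.2 - ((n:ℤ) - 1)) with hm
  -- within one queue path, points on an antidiagonal are unique
  have hdiag : ∀ (i : Fin q), ∀ a ∈ Q i, ∀ b ∈ Q i, a.1 + a.2 = b.1 + b.2 → a = b := by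
    intro i a ha b hb hab
    rcases hQ i a ha b hb with ⟨h1, h2⟩ | ⟨h1, h2⟩ <;>
      · have : a.1 = b.1 := by omega
        have : a.2 = b.2 := by omega
        exact Prod.ext (by omega) (by omega)
  -- r p ≤ p.1 - m p
  have hrle : ∀ p ∈ U, (r p : ℤ) ≤ p.1 - m p := by
    intro p hp
    have hmaps : Set.MapsTo Prod.fst (R p) ↑(Finset.Ico (m p) p.1) := by
      intro x hx
      obtain ⟨hxU, hx1, hx2⟩ := hx
      have hg := hgridmem x hxU
      simp only [Finset.coe_Ico, Set.mem_Ico, hm]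
      omega
    have hinj : Set.InjOn Prod.fst (R p) := by
      intro a ha b hb hab
      obtain ⟨_, ha1, _⟩ := ha
      obtain ⟨_, hb1, _⟩ := hb
      exact Prod.ext hab (by omega)
    have := Set.ncard_le_ncard_of_injOn Prod.fst hmaps hinj (Finset.finite_toSet _)
    rw [Set.ncard_coe_finset, Int.card_Ico] at this
    have hg := hgridmem p hp
    have hge : m p ≤ p.1 := by simp only [hm]; omega
    have hrdef : r p = (R p).ncard := rfl
    omega
  -- r p < q
  have hrlt : ∀ p ∈ U, (r p : ℤ) ≤ (q:ℤ) - 1 := by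
    intro p hp
    obtain ⟨i0, hi0⟩ := hidx p hp
    have hq0 : 0 < q := i0.pos
    set f : ℤ × ℤ → Fin q := fun x => if h : x ∈ U then (hidx x h).choose else ⟨0, hq0⟩
      with hf
    have hfmem : ∀ x ∈ U, x ∈ Q (f x) := by
      intro x hx
      simp only [hf, dif_pos hx]
      exact (hidx x hx).choose_spec
    have hpnR : p ∉ R p := by
      rintro ⟨-, -, h2⟩; exact absurd h2 (lt_irrefl _)
    have hmaps : Set.MapsTo f (insert p (R p)) Set.univ := fun _ _ => Set.mem_univ _
    have hinj : Set.InjOn f (insert p (R p)) := by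
      intro a ha b hb hab
      have haU : a ∈ U := by
        rcases ha with h | h
        · exact h ▸ hp
        · exact h.1
      have hbU : b ∈ U := by
        rcases hb with h | h
        · exact h ▸ hp
        · exact h.1
      have hsum : a.1 + a.2 = b.1 + b.2 := by
        have ha' : a.1 + a.2 = p.1 + p.2 := by
          rcases ha with h | h
          · rw [h]
          · exact h.2.1
        have hb' : b.1 + b.2 = p.1 + p.2 := by
          rcases hb with h | h
          · rw [h]
          · exact h.2.1
        omega
      exact hdiag (f a) a (hfmem a haU) b (hab ▸ hfmem b hbU) hsum
    have hcard := Set.ncard_le_ncard_of_injOn f hmaps hinj (Set.finite_univ)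
    rw [Set.ncard_insert_of_notMem hpnR (hRfin p)] at hcard
    rw [Set.ncard_univ, Nat.card_eq_fintype_card, Fintype.card_fin] at hcard
    have : r p + 1 ≤ q := hcard
    omega
  -- r is strictly monotone along an antidiagonal
  have hrmono : ∀ a ∈ U, ∀ b ∈ U, a.1 + a.2 = b.1 + b.2 → a.1 < b.1 → r a < r b := by
    intro a ha b hb hsum hlt
    have hsubR : insert a (R a) ⊆ R b := by
      rintro x (h | ⟨hxU, hx1, hx2⟩)
      · subst h; exact ⟨ha, hsum, hlt⟩
      · exact ⟨hxU, by omega, by omega⟩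
    have hanR : a ∉ R a := by rintro ⟨-, -, h2⟩; exact absurd h2 (lt_irrefl _)
    have := Set.ncard_le_ncard hsubR (hRfin b)
    rw [Set.ncard_insert_of_notMem hanR (hRfin a)] at this
    have e1 : r a = (R a).ncard := rfl
    have e2 : r b = (R b).ncard := rfl
    omega
  -- the injection
  set h : ℤ × ℤ → ℤ × ℤ := fun p => (m p + r p, p.1 + p.2 - m p - r p) with hh
  set T := (Finset.Ico (0:ℤ) n ×ˢ Finset.Ico (0:ℤ) n).filter
      (fun p => p.1 < (q:ℤ) ∨ (n:ℤ) - q ≤ p.2) with hT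
  have hmaps : Set.MapsTo h U ↑T := by
    intro p hp
    have hg := hgridmem p hp
    have h1 := hrle p hp
    have h2 := hrlt p hp
    simp only [hT, Finset.coe_filter, Set.mem_setOf_eq, Finset.mem_product, Finset.mem_Ico,
      hh, hm] at *
    omega
  have hinj : Set.InjOn h U := by
    intro a ha b hb hab
    simp only [hh, Prod.ext_iff] at hab
    obtain ⟨h1, h2⟩ := hab
    have hsum : a.1 + a.2 = b.1 + b.2 := by omega
    have hmeq : m a = m b := by simp only [hm, hsum]
    have hreq : r a = r b := by omega
    by_contra hne
    have h1ne : a.1 ≠ b.1 := by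
      intro hx
      exact hne (Prod.ext hx (by omega))
    rcases lt_or_gt_of_ne h1ne with hlt | hlt
    · exact absurd (hrmono a ha b hb hsum hlt) (by omega)
    · exact absurd (hrmono b hb a ha hsum.symm hlt) (by omega)
  have hle := Set.ncard_le_ncard_of_injOn h hmaps hinj (Finset.finite_toSet T)
  rw [Set.ncard_coe_finset] at hle
  calc ((⋃ i, Q i).ncard : ℤ) ≤ (T.card : ℤ) := by exact_mod_cast hle
    _ = 2 * n * q - q ^ 2 := target_card n q hq


theorem queuePaths_cover_bound (n q : ℕ) (hn : 1 ≤ n) (hq : q ≤ n) :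
    (∀ Q : Fin q → Set (ℤ × ℤ), (∀ i, IsQueuePath (Q i)) → (⋃ i, Q i) ⊆ gridH n →
      ((⋃ i, Q i).ncard : ℤ) ≤ 2 * n * q - q ^ 2) ∧
    (∃ Q : Fin q → Set (ℤ × ℤ), (∀ i, IsQueuePath (Q i)) ∧ (∀ i, Q i ⊆ gridH n) ∧
      (∀ i i' : Fin q, i ≠ i' → Disjoint (Q i) (Q i')) ∧
      ((⋃ i, Q i).ncard : ℤ) = 2 * n * q - q ^ 2) := by
  exact ⟨fun Q hQ hsub => bound n q hq Q hQ hsub, construction n q hq⟩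

end MixedPaper
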